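/- Fix a probability density π_b with full support, a bounded measurable function Q, and λ > 0. Among probability densities π, the functional E_{a∼π}[Q(a)] − λ·KL(π_b, π) is maximized by π(a) = π_b(a)/(Z − Q(a)/λ), where Z ∈ ℝ is the unique normalizing constant with Z > sup_a Q(a)/λ making π integrate to 1. -/

import Mathlib

open MeasureTheory

theorem reverse_kl_regularized_max {α : Type} [MeasurableSpace α] (μ : Measure α)
    (πb : α → ℝ) (hπb_meas : Measurable πb) (hπb_pos : ∀ a, 0 < πb a)
    (hπb_int : Integrable πb μ) (hπb_norm : ∫ a, πb a ∂μ = 1)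
    (Q : α → ℝ) (hQ_meas : Measurable Q) (B : ℝ) (hQ_bdd : ∀ a, |Q a| ≤ B)
    (lam : ℝ) (hlam : 0 < lam)
    (Z : ℝ) (hZ_gt : ∀ a, Q a / lam < Z)
    (hZ_norm : ∫ a, πb a / (Z - Q a / lam) ∂μ = 1)
    -- `Z` is the unique such normalizing constant:
    (hZ_unique : ∀ Z' : ℝ, (∀ a, Q a / lam < Z') →
      (∫ a, πb a / (Z' - Q a / lam) ∂μ = 1) → Z' = Z)
    (π : α → ℝ) (hπ_meas : Measurable π) (hπ_pos : ∀ a, 0 < π a)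
    (hπ_norm : ∫ a, π a ∂μ = 1)
    (hπQ_int : Integrable (fun a => π a * Q a) μ)
    (hπKL_int : Integrable (fun a => πb a * Real.log (πb a / π a)) μ) :
    (∫ a, π a * Q a ∂μ) - lam * (∫ a, πb a * Real.log (πb a / π a) ∂μ)
      ≤ (∫ a, (πb a / (Z - Q a / lam)) * Q a ∂μ)
        - lam * (∫ a, πb a * Real.log (πb a / (πb a / (Z - Q a / lam))) ∂μ) := by
  have hlam' : lam ≠ 0 := hlam.ne'
  set g : α → ℝ := fun a => Z - Q a / lam with hg_def
  have hg_pos : ∀ a, 0 < g a := fun a => sub_pos.mpr (hZ_gt a)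
  have hg_meas : Measurable g := measurable_const.sub (hQ_meas.div_const lam)
  have hπs_meas : Measurable (fun a => πb a / g a) := hπb_meas.div hg_meas
  have hπs_int : Integrable (fun a => πb a / g a) μ := by
    by_contra h
    rw [integral_undef h] at hZ_norm
    norm_num at hZ_norm
  have hπ_int : Integrable π μ := by
    by_contra h
    rw [integral_undef h] at hπ_norm
    norm_num at hπ_norm
  -- uniform bound on g
  have hQlow : ∀ a, -(B / lam) ≤ Q a / lam := by
    intro a
    have h : -B / lam ≤ Q a / lam :=
      (div_le_div_iff_of_pos_right hlam).mpr (by linarith [(abs_le.mp (hQ_bdd a)).1])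
    rw [neg_div] at h
    exact h
  have hg_le : ∀ a, g a ≤ Z + B / lam := by
    intro a
    have := hQlow a
    simp only [hg_def]
    linarith
  -- integrability of πb * log g by squeezing between integrable bounds
  have hf_meas : Measurable fun a => πb a * Real.log (g a) :=
    hπb_meas.mul (hg_meas.log)
  have hf_int : Integrable (fun a => πb a * Real.log (g a)) μ := by
    apply integrable_of_le_of_le (g₁ := fun a => πb a - πb a / g a)
      (g₂ := fun a => πb a * Real.log (Z + B / lam))
      hf_meas.aestronglyMeasurable
    · apply Filter.Eventually.of_forall
      intro a
      have hga := hg_pos a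
      have hb := hπb_pos a
      have hlog : 1 - (g a)⁻¹ ≤ Real.log (g a) := by
        have := Real.log_le_sub_one_of_pos (x := (g a)⁻¹) (by positivity)
        rw [Real.log_inv] at this
        linarith
      have h1 := mul_le_mul_of_nonneg_left hlog hb.le
      have h2 : πb a - πb a / g a = πb a * (1 - (g a)⁻¹) := by
        rw [div_eq_mul_inv]; ring
      linarith [h1, h2.le, h2.ge]
    · apply Filter.Eventually.of_forall
      intro a
      exact mul_le_mul_of_nonneg_left
        (Real.log_le_log (hg_pos a) (hg_le a)) (hπb_pos a).le
    · exact hπb_int.sub hπs_int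
    · exact hπb_int.mul_const _
  -- pointwise key inequality
  have key : ∀ a, π a * Q a - lam * (πb a * Real.log (πb a / π a))
      ≤ lam * Z * π a - lam * πb a - lam * (πb a * Real.log (g a)) := by
    intro a
    have hb := hπb_pos a
    have hp := hπ_pos a
    have hga := hg_pos a
    have ht : (0:ℝ) < g a * π a / πb a := by positivity
    have hlog := Real.log_le_sub_one_of_pos ht
    rw [Real.log_div (by positivity) hb.ne', Real.log_mul hga.ne' hp.ne'] at hlog
    have hlbp : Real.log (πb a / π a) = Real.log (πb a) - Real.log (π a) :=
      Real.log_div hb.ne' hp.ne'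
    have h2 : (Real.log (g a) + Real.log (π a) - Real.log (πb a)) * πb a
        ≤ g a * π a - πb a := by
      have h3 := mul_le_mul_of_nonneg_right hlog hb.le
      have h4 : (g a * π a / πb a - 1) * πb a = g a * π a - πb a := by
        field_simp
      linarith [h3.trans_eq h4]
    have h3 := mul_le_mul_of_nonneg_left h2 hlam.le
    have h5 : lam * (g a * π a) = lam * Z * π a - π a * Q a := by
      simp only [hg_def]
      field_simp
    rw [hlbp]
    nlinarith [h3, h5]
  -- the candidate's expected reward
  have hRHS1 : (∫ a, (πb a / (Z - Q a / lam)) * Q a ∂μ) = lam * Z - lam := by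
    have heq : ∀ a, (πb a / (Z - Q a / lam)) * Q a
        = lam * Z * (πb a / g a) - lam * πb a := by
      intro a
      have hga : (0:ℝ) < Z - Q a / lam := hg_pos a
      have hga' : lam * Z - Q a ≠ 0 := by
        have e : lam * (Z - Q a / lam) = lam * Z - Q a := by field_simp
        have := mul_pos hlam hga
        rw [e] at this
        exact this.ne'
      simp only [hg_def]
      field_simp
      rw [div_sub_one (by rw [mul_comm]; exact hga')]
      ring
    rw [integral_congr_ae (Filter.Eventually.of_forall heq),
      integral_sub ((hπs_int.const_mul _)) (hπb_int.const_mul _),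
      integral_const_mul, integral_const_mul, hZ_norm, hπb_norm]
    ring
  -- the candidate's KL term
  have hRHS2 : (∫ a, πb a * Real.log (πb a / (πb a / (Z - Q a / lam))) ∂μ)
      = ∫ a, πb a * Real.log (g a) ∂μ := by
    apply integral_congr_ae (Filter.Eventually.of_forall ?_)
    intro a
    have hb := (hπb_pos a).ne'
    have e : πb a / (πb a / (Z - Q a / lam)) = g a := by
      simp only [hg_def]
      rw [div_div_eq_mul_div, mul_comm, mul_div_assoc, div_self hb, mul_one]
    rw [e]
  rw [hRHS1, hRHS2]
  -- integrate the pointwise inequality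
  have hL_int : Integrable
      (fun a => π a * Q a - lam * (πb a * Real.log (πb a / π a))) μ :=
    hπQ_int.sub (hπKL_int.const_mul lam)
  have hR_int : Integrable
      (fun a => lam * Z * π a - lam * πb a - lam * (πb a * Real.log (g a))) μ :=
    ((hπ_int.const_mul (lam * Z)).sub (hπb_int.const_mul lam)).sub
      (hf_int.const_mul lam)
  have h1 : Integrable (fun a => lam * Z * π a - lam * πb a) μ :=
    (hπ_int.const_mul (lam * Z)).sub (hπb_int.const_mul lam)
  have hint := integral_mono hL_int hR_int key
  rw [integral_sub hπQ_int (hπKL_int.const_mul lam),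
    integral_sub h1 (hf_int.const_mul lam),
    integral_sub (hπ_int.const_mul (lam * Z)) (hπb_int.const_mul lam),
    integral_const_mul, integral_const_mul, integral_const_mul,
    hπ_norm, hπb_norm] at hint
  have e3 := integral_const_mul (μ := μ) lam (fun a => πb a * Real.log (g a))
  linarith
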